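/- Let Z be a positive integer with Z ≤ n. There exist an encoder E ∈ ℝ^{Z×n} and a decoder D ∈ ℝ^{n×Z} such that Tr(K(I − DE) Ψ (I − DE)ᵀ Kᵀ) = Σ_{i=Z+1}^{n} μᵢ; hence the minimum of the task-aware compression loss over all E ∈ ℝ^{Z×n} and D ∈ ℝ^{n×Z} equals Σ_{i=Z+1}^{n} μᵢ. -/

import Mathlib

open Matrix

/-! ### Auxiliary lemmas -/

lemma mul_cancel_left' {p q : Type*} [Fintype p] [Fintype q] [DecidableEq p]
    {A B : Matrix p p ℝ} (h : A * B = 1) (C : Matrix p q ℝ) : A * (B * C) = C := by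
  rw [← Matrix.mul_assoc, h, Matrix.one_mul]

lemma mul_idem_left {p q : Type*} [Fintype p] [Fintype q]
    {A : Matrix p p ℝ} (h : A * A = A) (C : Matrix p q ℝ) : A * (A * C) = A * C := by
  rw [← Matrix.mul_assoc, h]

lemma tr_mul_transpose_nonneg {p q : Type*} [Fintype p] [Fintype q]
    (B : Matrix p q ℝ) : 0 ≤ (B * Bᵀ).trace := by
  rw [Matrix.trace]
  refine Finset.sum_nonneg fun i _ => ?_
  simp only [Matrix.diag_apply, Matrix.mul_apply, Matrix.transpose_apply]
  exact Finset.sum_nonneg fun j _ => mul_self_nonneg _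

lemma sum_icc_eq_sum_fin (n Z : ℕ) (μ : ℕ → ℝ) :
    ∑ i ∈ Finset.Icc (Z + 1) n, μ i
      = ∑ j : Fin n, (if (j:ℕ) < Z then 0 else μ ((j:ℕ)+1)) := by
  rw [Fin.sum_univ_eq_sum_range (fun j => if j < Z then (0:ℝ) else μ (j+1)) n]
  rw [Finset.sum_ite, Finset.sum_const_zero, zero_add]
  refine Finset.sum_nbij' (i := fun i => i - 1) (j := fun j => j + 1) ?_ ?_ ?_ ?_ ?_
  · simp only [Finset.mem_filter, Finset.mem_range, Finset.mem_Icc, not_lt]; intros; omega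
  · simp only [Finset.mem_filter, Finset.mem_range, Finset.mem_Icc, not_lt]; intros; omega
  · simp only [Finset.mem_Icc]; intros; omega
  · simp only [Finset.mem_filter, Finset.mem_range, Finset.mem_Icc, not_lt]; intros; omega
  · simp only [Finset.mem_Icc]; intro a ha; congr 1; omega

lemma key_scalar (n Z : ℕ) (hZn : Z ≤ n) (μ : ℕ → ℝ) (t : Fin n → ℝ)
    (hmono : ∀ a b : ℕ, 1 ≤ a → a ≤ b → b ≤ n → μ b ≤ μ a)
    (hnn : ∀ k, 1 ≤ k → k ≤ n + 1 → 0 ≤ μ k) (hzero : μ (n + 1) = 0)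
    (ht0 : ∀ j, 0 ≤ t j) (ht1 : ∀ j, t j ≤ 1) (hts : ∑ j, t j ≤ (Z : ℝ)) :
    ∑ j : Fin n, μ ((j : ℕ) + 1) * t j
      ≤ ∑ j : Fin n, (if (j : ℕ) < Z then μ ((j : ℕ) + 1) else 0) := by
  set c := μ (Z + 1) with hc
  have hc0 : 0 ≤ c := hnn (Z + 1) (by omega) (by omega)
  have hcard : ∑ j : Fin n, (if (j : ℕ) < Z then (1 : ℝ) else 0) = Z := by
    rw [Fin.sum_univ_eq_sum_range (fun j => if j < Z then (1 : ℝ) else 0) n]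
    rw [Finset.sum_boole]
    have : (Finset.range n).filter (fun j => j < Z) = Finset.range Z := by
      ext a; simp only [Finset.mem_filter, Finset.mem_range]; omega
    rw [this, Finset.card_range]
  have hpt : ∀ j : Fin n, μ ((j : ℕ) + 1) * t j
      ≤ (if (j : ℕ) < Z then μ ((j : ℕ) + 1) else 0)
        + c * (t j - (if (j : ℕ) < Z then 1 else 0)) := by
    intro j
    by_cases hj : (j : ℕ) < Z
    · simp only [hj, if_pos]
      have h1 : c ≤ μ ((j : ℕ) + 1) := by
        rcases eq_or_lt_of_le hZn with h | h
        · rw [hc, h, hzero]; exact hnn _ (by omega) (by omega)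
        · exact hmono ((j : ℕ) + 1) (Z + 1) (by omega) (by omega) (by omega)
      nlinarith [ht1 j]
    · simp only [hj, if_neg, not_false_iff]
      have h2 : μ ((j : ℕ) + 1) ≤ c :=
        hmono (Z + 1) ((j : ℕ) + 1) (by omega) (by omega) (by omega)
      have := mul_le_mul_of_nonneg_right h2 (ht0 j)
      linarith
  calc ∑ j : Fin n, μ ((j : ℕ) + 1) * t j
      ≤ ∑ j : Fin n, ((if (j : ℕ) < Z then μ ((j : ℕ) + 1) else 0)
          + c * (t j - (if (j : ℕ) < Z then 1 else 0))) :=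
        Finset.sum_le_sum fun j _ => hpt j
    _ = (∑ j : Fin n, (if (j : ℕ) < Z then μ ((j : ℕ) + 1) else 0))
          + c * ((∑ j, t j) - (Z : ℝ)) := by
        rw [Finset.sum_add_distrib, ← Finset.mul_sum, Finset.sum_sub_distrib, hcard]
    _ ≤ ∑ j : Fin n, (if (j : ℕ) < Z then μ ((j : ℕ) + 1) else 0) := by
        nlinarith [hc0, hts]

lemma exists_proj (n Z : ℕ) (F : Matrix (Fin Z) (Fin n) ℝ) :
    ∃ (r : ℕ) (W : Matrix (Fin r) (Fin n) ℝ), r ≤ Z ∧ W * Wᵀ = 1 ∧ F * (Wᵀ * W) = F := by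
  classical
  set E := EuclideanSpace ℝ (Fin n)
  set Wsp : Submodule ℝ E := Submodule.span ℝ (Set.range (fun i : Fin Z => (WithLp.toLp 2 (F i) : E))) with hWsp
  set b := stdOrthonormalBasis ℝ Wsp with hbdef
  set W : Matrix (Fin (Module.finrank ℝ Wsp)) (Fin n) ℝ :=
    Matrix.of (fun k j => ((b k : E) j)) with hWdef
  have hWapp : ∀ k j, W k j = ((b k : E) j) := fun k j => rfl
  refine ⟨Module.finrank ℝ Wsp, W, ?_, ?_, ?_⟩
  · refine (finrank_span_le_card _).trans ?_
    have h2 := Fintype.card_range_le (fun i : Fin Z => (WithLp.toLp 2 (F i) : E))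
    simp only [Fintype.card_fin] at h2
    refine le_trans ?_ h2
    rw [Set.toFinset_card]
  · ext k k'
    have hb := b.orthonormal
    rw [orthonormal_iff_ite] at hb
    have := hb k k'
    rw [Submodule.coe_inner, PiLp.inner_apply] at this
    simp only [RCLike.inner_apply, starRingEnd_apply, star_trivial] at this
    simp only [Matrix.mul_apply, Matrix.transpose_apply, Matrix.one_apply, hWapp]
    rw [← this]; exact Finset.sum_congr rfl fun _ _ => mul_comm _ _
  · ext i l
    have hv : (WithLp.toLp 2 (F i) : E) ∈ Wsp := Submodule.subset_span (Set.mem_range_self i)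
    have hrepr := b.sum_repr ⟨WithLp.toLp 2 (F i), hv⟩
    have hcoord : ∀ l : Fin n,
        ∑ k, b.repr ⟨WithLp.toLp 2 (F i), hv⟩ k * ((b k : E) l) = F i l := by
      intro l
      have h0 : ((∑ k, b.repr ⟨WithLp.toLp 2 (F i), hv⟩ k • b k : Wsp) : E) = WithLp.toLp 2 (F i) := by rw [hrepr]
      rw [Submodule.coe_sum] at h0
      have h1 := congrArg (PiLp.projₗ (𝕜 := ℝ) 2 (fun _ : Fin n => ℝ) l) h0
      simp only [map_sum, LinearMap.map_smul, PiLp.projₗ_apply, smul_eq_mul,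
        SetLike.val_smul] at h1
      exact h1
    have hrk : ∀ k, b.repr ⟨WithLp.toLp 2 (F i), hv⟩ k = ∑ j, ((b k : E) j) * F i j := by
      intro k
      rw [OrthonormalBasis.repr_apply_apply]
      rw [Submodule.coe_inner, PiLp.inner_apply]
      simp only [RCLike.inner_apply, starRingEnd_apply, star_trivial]
      exact Finset.sum_congr rfl fun _ _ => mul_comm _ _
    rw [Matrix.mul_apply]
    calc ∑ j, F i j * (Wᵀ * W) j l
        = ∑ j, ∑ k, F i j * (W k j * W k l) := by
          refine Finset.sum_congr rfl fun j _ => ?_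
          rw [Matrix.mul_apply, Finset.mul_sum]
          exact Finset.sum_congr rfl fun k _ => by rw [Matrix.transpose_apply]
      _ = ∑ k, (∑ j, ((b k : E) j) * F i j) * W k l := by
          rw [Finset.sum_comm]
          refine Finset.sum_congr rfl fun k _ => ?_
          rw [Finset.sum_mul]
          exact Finset.sum_congr rfl fun j _ => by rw [hWapp]; ring
      _ = ∑ k, b.repr ⟨WithLp.toLp 2 (F i), hv⟩ k * ((b k : E) l) := by
          refine Finset.sum_congr rfl fun k _ => by rw [hrk, hWapp]
      _ = F i l := hcoord l

set_option maxHeartbeats 2000000 in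
theorem task_aware_pca_achievability
    (n m Z : ℕ) (hn : 0 < n) (hm : 0 < m) (hZ : 0 < Z) (hZn : Z ≤ n)
    (Ψ L : Matrix (Fin n) (Fin n) ℝ) (hΨ : Ψ.PosDef) (hChol : Ψ = L * Lᵀ)
    (hLtri : ∀ i j : Fin n, i < j → L i j = 0) (hLdiag : ∀ i : Fin n, 0 < L i i)
    (K : Matrix (Fin m) (Fin n) ℝ)
    (μ : ℕ → ℝ) (u : Fin n → (Fin n → ℝ))
    (hdesc : ∀ i : ℕ, 1 ≤ i → i < n → μ (i + 1) ≤ μ i)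
    (hzero : μ (n + 1) = 0)
    (horth : ∀ i j : Fin n, dotProduct (u i) (u j) = if i = j then 1 else 0)
    (heig : ∀ i : Fin n, (Lᵀ * Kᵀ * K * L).mulVec (u i) = μ ((i : ℕ) + 1) • u i) :
    (∃ (E : Matrix (Fin Z) (Fin n) ℝ) (D : Matrix (Fin n) (Fin Z) ℝ),
      (K * (1 - D * E) * Ψ * (1 - D * E)ᵀ * Kᵀ).trace =
        ∑ i ∈ Finset.Icc (Z + 1) n, μ i) ∧
    IsLeast {l : ℝ | ∃ (E : Matrix (Fin Z) (Fin n) ℝ) (D : Matrix (Fin n) (Fin Z) ℝ),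
        l = (K * (1 - D * E) * Ψ * (1 - D * E)ᵀ * Kᵀ).trace}
      (∑ i ∈ Finset.Icc (Z + 1) n, μ i) := by
  classical
  -- ## Setup: the orthogonal matrix U and the diagonalization of S
  obtain ⟨U, hU⟩ : ∃ U', U' = (Matrix.of u : Matrix (Fin n) (Fin n) ℝ) := ⟨_, rfl⟩
  obtain ⟨Dg, hDg⟩ : ∃ D', D' = (Matrix.diagonal (fun i : Fin n => μ ((i : ℕ) + 1))) := ⟨_, rfl⟩
  have hUU : U * Uᵀ = 1 := by
    ext i j
    simp only [Matrix.mul_apply, Matrix.transpose_apply, Matrix.one_apply, hU, Matrix.of_apply]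
    simpa [dotProduct] using horth i j
  have hUtU : Uᵀ * U = 1 := mul_eq_one_comm.mp hUU
  have hSU : Lᵀ * Kᵀ * K * L * Uᵀ = Uᵀ * Dg := by
    ext i j
    rw [hDg, Matrix.mul_diagonal]
    have := congrFun (heig j) i
    simp only [Matrix.mulVec, dotProduct, Pi.smul_apply, smul_eq_mul] at this
    rw [Matrix.mul_apply]
    simp only [Matrix.transpose_apply, hU, Matrix.of_apply]
    rw [this]; ring
  have hS : Lᵀ * Kᵀ * K * L = Uᵀ * Dg * U := by
    have h1 : Lᵀ * Kᵀ * K * L * Uᵀ * U = Uᵀ * Dg * U := by rw [hSU]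
    rwa [Matrix.mul_assoc, hUtU, Matrix.mul_one] at h1
  -- ## eigenvalue nonnegativity and monotonicity
  have hdsq : ∀ (v : Fin n → ℝ), 0 ≤ v ⬝ᵥ ((Lᵀ * Kᵀ * K * L) *ᵥ v) := by
    intro v
    have hS' : Lᵀ * Kᵀ * K * L = (K * L)ᵀ * (K * L) := by
      simp only [Matrix.transpose_mul, Matrix.mul_assoc]
    rw [hS', ← Matrix.mulVec_mulVec, Matrix.dotProduct_mulVec, Matrix.vecMul_transpose]
    exact Finset.sum_nonneg fun i _ => mul_self_nonneg _
  have hμ0 : ∀ j : Fin n, 0 ≤ μ ((j : ℕ) + 1) := by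
    intro j
    have h1 := hdsq (u j)
    rw [heig j, dotProduct_smul] at h1
    simpa [horth j j] using h1
  have hμnn : ∀ k, 1 ≤ k → k ≤ n + 1 → 0 ≤ μ k := by
    intro k hk1 hk2
    by_cases hk : k = n + 1
    · rw [hk, hzero]
    · have hkn : k ≤ n := by omega
      have h := hμ0 ⟨k - 1, by omega⟩
      simpa [show k - 1 + 1 = k from by omega] using h
  have hmono : ∀ a b : ℕ, 1 ≤ a → a ≤ b → b ≤ n → μ b ≤ μ a := by
    intro a b ha hab
    induction b, hab using Nat.le_induction with
    | base => intro _; exact le_refl _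
    | succ b hb ih =>
      intro hbn
      exact le_trans (hdesc b (by omega) (by omega)) (ih (by omega))
  -- ## invertibility of L
  have hdetL : IsUnit L.det := by
    have h1 : 0 < Ψ.det := hΨ.det_pos
    rw [hChol, Matrix.det_mul, Matrix.det_transpose] at h1
    exact isUnit_iff_ne_zero.mpr (by nlinarith)
  have hLinv : L * L⁻¹ = 1 := Matrix.mul_nonsing_inv L hdetL
  have hLinvL : L⁻¹ * L = 1 := Matrix.nonsing_inv_mul L hdetL
  have hLT : Lᵀ * L⁻¹ᵀ = 1 := by
    rw [← Matrix.transpose_mul, hLinvL, Matrix.transpose_one]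
  -- ## the matrix X = K L Uᵀ and trace identities
  obtain ⟨X, hX⟩ : ∃ X', X' = K * (L * Uᵀ) := ⟨_, rfl⟩
  have hXtX : Xᵀ * X = Dg := by
    rw [hX]
    calc (K * (L * Uᵀ))ᵀ * (K * (L * Uᵀ)) = U * (Lᵀ * Kᵀ * K * L) * Uᵀ := by
          simp only [Matrix.transpose_mul, Matrix.transpose_transpose, Matrix.mul_assoc]
      _ = U * (Uᵀ * Dg * U) * Uᵀ := by rw [hS]
      _ = Dg := by
          simp only [Matrix.mul_assoc]
          rw [hUU, Matrix.mul_one]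
          exact mul_cancel_left' hUU Dg
  have htrX : ∀ M : Matrix (Fin n) (Fin n) ℝ,
      ((X * M) * Xᵀ).trace = (Dg * M).trace := by
    intro M
    rw [Matrix.trace_mul_comm, ← Matrix.mul_assoc, hXtX]
  have htrDg : ∀ M : Matrix (Fin n) (Fin n) ℝ,
      (Dg * M).trace = ∑ j : Fin n, μ ((j : ℕ) + 1) * M j j := by
    intro M
    rw [hDg]
    simp [Matrix.trace, Matrix.diag, Matrix.diagonal_mul]
  -- ## the truncation matrices
  obtain ⟨N, hN⟩ : ∃ N', N' = (Matrix.of (fun (k : Fin Z) (j : Fin n) =>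
      if (j : ℕ) = (k : ℕ) then (1:ℝ) else 0)) := ⟨_, rfl⟩
  obtain ⟨Dz, hDz⟩ : ∃ D', D' = (Matrix.diagonal (fun j : Fin n =>
      if (j : ℕ) < Z then (1:ℝ) else 0)) := ⟨_, rfl⟩
  have hNtN : Nᵀ * N = Dz := by
    ext j j'
    rw [hN, hDz, Matrix.mul_apply]
    simp only [Matrix.transpose_apply, Matrix.of_apply, Matrix.diagonal_apply]
    by_cases hj : (j : ℕ) < Z
    · rw [Finset.sum_eq_single (⟨(j : ℕ), hj⟩ : Fin Z)]
      · by_cases hjj : j = j'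
        · subst hjj; simp [hj]
        · have : (j' : ℕ) ≠ (j : ℕ) := fun h => hjj (Fin.ext h.symm)
          simp [hjj, this]
      · intro b _ hb
        have : (j : ℕ) ≠ (b : ℕ) := fun h => hb (Fin.ext h.symm)
        simp [this]
      · simp
    · rw [Finset.sum_eq_zero]
      · by_cases hjj : j = j'
        · subst hjj; simp [hj]
        · simp [hjj]
      · intro b _
        have : (j : ℕ) ≠ (b : ℕ) := by have := b.2; omega
        simp [this]
  have hDzidem : Dz * Dz = Dz := by
    rw [hDz, Matrix.diagonal_mul_diagonal]
    refine congrArg Matrix.diagonal (funext fun j => ?_)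
    by_cases h : (j : ℕ) < Z <;> simp [h]
  have hDzT : Dzᵀ = Dz := by rw [hDz, Matrix.diagonal_transpose]
  have hT : (1 - Dz)ᵀ = 1 - Dz := by
    rw [Matrix.transpose_sub, Matrix.transpose_one, hDzT]
  have hTidem : (1 - Dz) * (1 - Dz) = 1 - Dz := by
    calc (1 - Dz) * (1 - Dz) = 1 - Dz - Dz + Dz * Dz := by noncomm_ring
      _ = 1 - Dz := by rw [hDzidem]; abel
  -- ## achievability
  obtain ⟨E₀, hE₀⟩ : ∃ E', E' = N * (U * L⁻¹) := ⟨_, rfl⟩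
  obtain ⟨D₀, hD₀⟩ : ∃ D', D' = L * (Uᵀ * (Dz * Nᵀ)) := ⟨_, rfl⟩
  have hDE : D₀ * E₀ = L * (Uᵀ * (Dz * (U * L⁻¹))) := by
    rw [hE₀, hD₀]
    simp only [Matrix.mul_assoc]
    rw [show Nᵀ * (N * (U * L⁻¹)) = Dz * (U * L⁻¹) from by rw [← Matrix.mul_assoc, hNtN]]
    rw [show Dz * (Dz * (U * L⁻¹)) = Dz * (U * L⁻¹) from mul_idem_left hDzidem _]
  have h1 : 1 - D₀ * E₀ = L * (Uᵀ * ((1 - Dz) * (U * L⁻¹))) := by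
    rw [hDE, Matrix.sub_mul, Matrix.one_mul, Matrix.mul_sub,
      mul_cancel_left' hUtU (L⁻¹), Matrix.mul_sub, hLinv]
  have hach : (K * (1 - D₀ * E₀) * Ψ * (1 - D₀ * E₀)ᵀ * Kᵀ).trace =
      ∑ i ∈ Finset.Icc (Z + 1) n, μ i := by
    have h2 : K * (1 - D₀ * E₀) * Ψ * (1 - D₀ * E₀)ᵀ * Kᵀ = (X * (1 - Dz)) * Xᵀ := by
      rw [h1, hChol, hX]
      simp only [Matrix.transpose_mul, Matrix.transpose_transpose, hT, Matrix.mul_assoc,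
        mul_cancel_left' hLinvL, mul_cancel_left' hLT, mul_cancel_left' hUU,
        mul_idem_left hTidem]
    rw [h2, htrX, htrDg, sum_icc_eq_sum_fin]
    refine Finset.sum_congr rfl fun j _ => ?_
    have hdiag : (1 - Dz) j j = 1 - (if (j : ℕ) < Z then (1:ℝ) else 0) := by
      rw [hDz]
      simp [Matrix.one_apply, Matrix.diagonal_apply]
    rw [hdiag]
    by_cases h : (j : ℕ) < Z <;> simp [h]
  -- ## lower bound
  have hlb : ∀ (E : Matrix (Fin Z) (Fin n) ℝ) (D : Matrix (Fin n) (Fin Z) ℝ),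
      ∑ i ∈ Finset.Icc (Z + 1) n, μ i ≤
        (K * (1 - D * E) * Ψ * (1 - D * E)ᵀ * Kᵀ).trace := by
    intro E D
    obtain ⟨C, hC⟩ : ∃ C', C' = K * D := ⟨_, rfl⟩
    obtain ⟨F, hF⟩ : ∃ F', F' = E * (L * Uᵀ) := ⟨_, rfl⟩
    obtain ⟨A, hA⟩ : ∃ A', A' = X - C * F := ⟨_, rfl⟩
    -- rewrite the loss as trace (A * Aᵀ)
    have hAeq : K * (1 - D * E) * Ψ * (1 - D * E)ᵀ * Kᵀ = A * Aᵀ := by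
      rw [hA, hC, hF, hX, hChol]
      simp only [Matrix.transpose_sub, Matrix.transpose_mul, Matrix.transpose_transpose,
        Matrix.transpose_one, Matrix.sub_mul, Matrix.mul_sub, Matrix.one_mul,
        Matrix.mul_one, Matrix.mul_assoc, mul_cancel_left' hUU, mul_cancel_left' hUtU]
    -- the projection
    obtain ⟨r, W, hrZ, hWWt, hFQ⟩ := exists_proj n Z F
    obtain ⟨Q, hQ⟩ : ∃ Q', Q' = Wᵀ * W := ⟨_, rfl⟩
    have hQsym : Qᵀ = Q := by rw [hQ, Matrix.transpose_mul, Matrix.transpose_transpose]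
    have hQidem : Q * Q = Q := by
      rw [hQ, Matrix.mul_assoc, ← Matrix.mul_assoc W Wᵀ W, hWWt, Matrix.one_mul]
    have hFQ' : F * Q = F := by rw [hQ]; exact hFQ
    have hQ1sym : (1 - Q)ᵀ = 1 - Q := by
      rw [Matrix.transpose_sub, Matrix.transpose_one, hQsym]
    have hQ1idem : (1 - Q) * (1 - Q) = 1 - Q := by
      calc (1 - Q) * (1 - Q) = 1 - Q - Q + Q * Q := by noncomm_ring
        _ = 1 - Q := by rw [hQidem]; abel
    -- diagonal entries of Q
    have hQd0 : ∀ j, 0 ≤ Q j j := by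
      intro j
      rw [hQ, Matrix.mul_apply]
      exact Finset.sum_nonneg fun k _ => by
        simp only [Matrix.transpose_apply]; exact mul_self_nonneg _
    have hQd1 : ∀ j, Q j j ≤ 1 := by
      intro j
      have hsq : Q j j ^ 2 ≤ Q j j := by
        have h1 : (Q * Q) j j = ∑ l, Q j l * Q l j := Matrix.mul_apply
        have h2 : ∀ l, Q j l * Q l j = Q j l ^ 2 := by
          intro l
          have h4 : Q l j = Q j l := by
            have := congrFun (congrFun hQsym j) l
            simpa [Matrix.transpose_apply] using this
          rw [h4]; ring
        have h3 : Q j j = ∑ l, Q j l ^ 2 := by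
          conv_lhs => rw [← hQidem]
          rw [h1]
          exact Finset.sum_congr rfl fun l _ => h2 l
        have h5 := Finset.single_le_sum (f := fun l => Q j l ^ 2)
          (fun l _ => sq_nonneg _) (Finset.mem_univ j)
        rw [← h3] at h5
        exact h5
      nlinarith [hQd0 j]
    have hQtr : ∑ j, Q j j ≤ (Z : ℝ) := by
      have h1 : Q.trace = (W * Wᵀ).trace := by rw [hQ, Matrix.trace_mul_comm]
      have h2 : Q.trace = (r : ℝ) := by rw [h1, hWWt, Matrix.trace_one]; simp
      have h3 : ∑ j, Q j j = Q.trace := rfl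
      rw [h3, h2]
      exact_mod_cast hrZ
    -- split the trace
    have hsplit : (A * Aᵀ).trace
        = ((A * Wᵀ) * (A * Wᵀ)ᵀ).trace + ((X * (1 - Q)) * Xᵀ).trace := by
      have e1 : A * Aᵀ = A * (Q * Aᵀ) + A * ((1 - Q) * Aᵀ) := by
        have h0 : Q + (1 - Q) = (1 : Matrix (Fin n) (Fin n) ℝ) := by abel
        have : Q * Aᵀ + (1 - Q) * Aᵀ = Aᵀ := by
          rw [← Matrix.add_mul, h0, Matrix.one_mul]
        rw [← Matrix.mul_add, this]
      have e2 : A * (Q * Aᵀ) = (A * Wᵀ) * (A * Wᵀ)ᵀ := by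
        rw [hQ]
        simp only [Matrix.transpose_mul, Matrix.transpose_transpose, Matrix.mul_assoc]
      have e3 : A * ((1 - Q) * Aᵀ) = (X * (1 - Q)) * Xᵀ := by
        have hAQ : A * (1 - Q) = X * (1 - Q) := by
          rw [hA, Matrix.sub_mul]
          have : C * F * (1 - Q) = 0 := by
            rw [Matrix.mul_assoc, Matrix.mul_sub, Matrix.mul_one, hFQ', sub_self,
              Matrix.mul_zero]
          rw [this, sub_zero]
        have t1 : ∀ (B : Matrix (Fin m) (Fin n) ℝ),
            (B * (1 - Q)) * (B * (1 - Q))ᵀ = B * ((1 - Q) * Bᵀ) := by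
          intro B
          rw [Matrix.transpose_mul, hQ1sym, Matrix.mul_assoc, mul_idem_left hQ1idem]
        calc A * ((1 - Q) * Aᵀ)
            = (A * (1 - Q)) * (A * (1 - Q))ᵀ := (t1 A).symm
          _ = (X * (1 - Q)) * (X * (1 - Q))ᵀ := by rw [hAQ]
          _ = X * ((1 - Q) * Xᵀ) := t1 X
          _ = (X * (1 - Q)) * Xᵀ := by rw [Matrix.mul_assoc]
      rw [e1, Matrix.trace_add, e2, e3]
    -- bound each piece
    have hb1 : 0 ≤ ((A * Wᵀ) * (A * Wᵀ)ᵀ).trace := tr_mul_transpose_nonneg _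
    have hb2 : ∑ i ∈ Finset.Icc (Z + 1) n, μ i ≤ ((X * (1 - Q)) * Xᵀ).trace := by
      rw [htrX, htrDg]
      have hkey := key_scalar n Z hZn μ (fun j => Q j j) hmono hμnn hzero hQd0 hQd1 hQtr
      rw [sum_icc_eq_sum_fin]
      have hpoint : ∀ j : Fin n, μ ((j : ℕ) + 1) * (1 - Q) j j
          = μ ((j : ℕ) + 1) - μ ((j : ℕ) + 1) * Q j j := by
        intro j
        have : (1 - Q) j j = 1 - Q j j := by
          simp [Matrix.sub_apply, Matrix.one_apply]
        rw [this]; ring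
      rw [Finset.sum_congr rfl (fun j _ => hpoint j), Finset.sum_sub_distrib]
      have : ∑ j : Fin n, (if (j : ℕ) < Z then (0:ℝ) else μ ((j : ℕ) + 1))
          = (∑ j : Fin n, μ ((j : ℕ) + 1))
            - ∑ j : Fin n, (if (j : ℕ) < Z then μ ((j : ℕ) + 1) else 0) := by
        rw [← Finset.sum_sub_distrib]
        refine Finset.sum_congr rfl fun j _ => ?_
        by_cases h : (j : ℕ) < Z <;> simp [h]
      rw [this]
      have := hkey
      linarith
    rw [hAeq, hsplit]
    linarith
  -- ## conclusion
  refine ⟨⟨E₀, D₀, hach⟩, ⟨E₀, D₀, hach.symm⟩, ?_⟩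
  rintro l ⟨E, D, rfl⟩
  exact hlb E D
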